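/- arXiv:0707.2515 — 4 statements merged into one kernel-verified Lean document; each statement's English description precedes it below -/
import Mathlib

section
/- Let X be a Polish space. Then the set of Borel probability measures on X with full support (i.e., giving positive mass to every nonempty open set) is a Gδ subset of the space of all Borel probability measures on X equipped with the weak topology. -/
open MeasureTheory Topology Metric

lemma isOpen_pos_measure_of_isOpen
    {X : Type*} [MetricSpace X] [MeasurableSpace X] [BorelSpace X]
    {U : Set X} (hU : IsOpen U) :
    IsOpen {μ : ProbabilityMeasure X | 0 < μ.toMeasure U} := by
  by_cases huniv : U = Set.univ
  · have : {μ : ProbabilityMeasure X | 0 < μ.toMeasure U} = Set.univ := by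
      ext μ
      simp [huniv]
    rw [this]
    exact isOpen_univ
  have hUc : (Uᶜ : Set X).Nonempty := Set.nonempty_compl.mpr huniv
  have hUc_closed : IsClosed (Uᶜ : Set X) := hU.isClosed_compl
  -- the closed "cores" of U
  set F : ℕ → Set X := fun n => {x | 1 / (n + 1 : ℝ) ≤ infDist x Uᶜ} with hF
  have hδpos : ∀ n : ℕ, (0 : ℝ) < 1 / (2 * (n + 1)) := by
    intro n; positivity
  have hFclosed : ∀ n, IsClosed (F n) := by
    intro n
    exact isClosed_le continuous_const (continuous_infDist_pt _)
  have hFsubU : ∀ n, F n ⊆ U := by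
    intro n x hx
    by_contra hxU
    have h0 : infDist x Uᶜ = 0 := infDist_zero_of_mem hxU
    have h1 : (0:ℝ) < 1 / (n + 1 : ℝ) := by positivity
    simp only [hF, Set.mem_setOf_eq, h0] at hx
    linarith
  have hthick : ∀ n : ℕ, thickening (1 / (2 * ((n : ℝ) + 1))) (F n) ⊆ U := by
    intro n x hx
    rw [mem_thickening_iff] at hx
    obtain ⟨y, hyF, hxy⟩ := hx
    by_contra hxU
    have h0 : infDist x Uᶜ = 0 := infDist_zero_of_mem hxU
    have htri : infDist y Uᶜ ≤ infDist x Uᶜ + dist x y := by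
      simpa [dist_comm] using infDist_le_infDist_add_dist (x := y) (y := x) (s := Uᶜ)
    have hyF' : 1 / (n + 1 : ℝ) ≤ infDist y Uᶜ := hyF
    have hn : 1 / (2 * (n + 1) : ℝ) < 1 / (n + 1 : ℝ) := by
      apply one_div_lt_one_div_of_lt
      · positivity
      · nlinarith [Nat.cast_nonneg (α := ℝ) n]
    have hyF'' : 1 / (n + 1 : ℝ) ≤ infDist y Uᶜ := hyF'
    rw [h0] at htri
    simp only [zero_add] at htri
    linarith
  -- the approximating bounded continuous functions
  set g : ℕ → BoundedContinuousFunction X NNReal :=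
    fun n => thickenedIndicator (hδpos n) (F n) with hg
  have key : {μ : ProbabilityMeasure X | 0 < μ.toMeasure U}
      = ⋃ n, (fun μ : ProbabilityMeasure X => μ.toFiniteMeasure.testAgainstNN (g n)) ⁻¹'
          (Set.Ioi 0) := by
    ext μ
    simp only [Set.mem_setOf_eq, Set.mem_iUnion, Set.mem_preimage, Set.mem_Ioi]
    constructor
    · intro hμU
      -- U ⊆ ⋃ F n
      have hUsub : U ⊆ ⋃ n, F n := by
        intro x hx
        have hx' : 0 < infDist x Uᶜ :=
          (hUc_closed.notMem_iff_infDist_pos hUc).mp (by simpa using hx)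
        obtain ⟨n, hn⟩ := exists_nat_one_div_lt hx'
        exact Set.mem_iUnion.mpr ⟨n, le_of_lt hn⟩
      have : (0 : ENNReal) < ∑' n, μ.toMeasure (F n) :=
        lt_of_lt_of_le hμU (le_trans (measure_mono hUsub) (measure_iUnion_le F))
      have hex : ∃ n, 0 < μ.toMeasure (F n) := by
        by_contra hcon
        push_neg at hcon
        simp only [nonpos_iff_eq_zero] at hcon
        simp [hcon] at this
      obtain ⟨n, hn⟩ := hex
      refine ⟨n, ?_⟩
      have hle : μ.toMeasure (F n) ≤ ∫⁻ x, (g n x : ENNReal) ∂μ.toMeasure :=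
        measure_le_lintegral_thickenedIndicator μ.toMeasure
          (hFclosed n).measurableSet (hδpos n)
      have hpos : 0 < ∫⁻ x, (g n x : ENNReal) ∂μ.toMeasure := lt_of_lt_of_le hn hle
      have hcoe : (μ.toFiniteMeasure.testAgainstNN (g n) : ENNReal)
          = ∫⁻ x, (g n x : ENNReal) ∂μ.toMeasure :=
        FiniteMeasure.testAgainstNN_coe_eq
      rw [← ENNReal.coe_pos, hcoe]
      exact hpos
    · rintro ⟨n, hn⟩
      have hcoe : (μ.toFiniteMeasure.testAgainstNN (g n) : ENNReal)
          = ∫⁻ x, (g n x : ENNReal) ∂μ.toMeasure :=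
        FiniteMeasure.testAgainstNN_coe_eq
      have hpos : 0 < ∫⁻ x, (g n x : ENNReal) ∂μ.toMeasure := by
        rw [← hcoe]
        exact_mod_cast hn
      have hle : ∫⁻ x, (g n x : ENNReal) ∂μ.toMeasure ≤ μ.toMeasure U := by
        have hbound : ∀ x, (g n x : ENNReal) ≤ U.indicator (fun _ => 1) x := by
          intro x
          by_cases hx : x ∈ U
          · rw [Set.indicator_of_mem hx]
            calc (g n x : ENNReal) ≤ ((1 : NNReal) : ENNReal) :=
                  ENNReal.coe_le_coe.mpr (thickenedIndicator_le_one (hδpos n) (F n) x)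
              _ = 1 := rfl
          · rw [Set.indicator_of_notMem hx]
            have hxthick : x ∉ thickening (1 / (2 * (n + 1))) (F n) :=
              fun h => hx (hthick n h)
            have : g n x = 0 := thickenedIndicator_zero (hδpos n) (F n) hxthick
            simp [this]
        calc ∫⁻ x, (g n x : ENNReal) ∂μ.toMeasure
            ≤ ∫⁻ x, U.indicator (fun _ => 1) x ∂μ.toMeasure :=
              lintegral_mono hbound
          _ = μ.toMeasure U := by
              rw [lintegral_indicator hU.measurableSet]
              simp
      exact lt_of_lt_of_le hpos hle
  rw [key]
  exact isOpen_iUnion fun n =>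
    (ProbabilityMeasure.continuous_testAgainstNN_eval (g n)).isOpen_preimage _ isOpen_Ioi

/-- On a Polish space, the set of Borel probability measures of full support
(positive mass on every nonempty open set) is a Gδ subset of the space of all
Borel probability measures with the weak topology. -/
theorem isGδ_fullSupport_probabilityMeasures
    {X : Type*} [TopologicalSpace X] [PolishSpace X] [MeasurableSpace X] [BorelSpace X] :
    IsGδ {μ : ProbabilityMeasure X |
      ∀ U : Set X, IsOpen U → U.Nonempty → 0 < μ.toMeasure U} := by
  letI := TopologicalSpace.upgradeIsCompletelyMetrizable X
  obtain ⟨B, hBcount, hBempty, hBbasis⟩ := TopologicalSpace.exists_countable_basis X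
  have key : {μ : ProbabilityMeasure X |
      ∀ U : Set X, IsOpen U → U.Nonempty → 0 < μ.toMeasure U}
      = ⋂ U ∈ B, {μ : ProbabilityMeasure X | 0 < μ.toMeasure U} := by
    ext μ
    simp only [Set.mem_setOf_eq, Set.mem_iInter]
    constructor
    · intro h U hUB
      exact h U (hBbasis.isOpen hUB)
        (Set.nonempty_iff_ne_empty.mpr (fun he => hBempty (he ▸ hUB)))
    · intro h U hU ⟨x, hx⟩
      obtain ⟨V, hVB, hxV, hVU⟩ := hBbasis.exists_subset_of_mem_open hx hU
      exact lt_of_lt_of_le (h V hVB) (measure_mono hVU)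
  rw [key]
  exact IsGδ.biInter hBcount fun U _ =>
    (isOpen_pos_measure_of_isOpen (hBbasis.isOpen ‹U ∈ B›)).isGδ
end

section
/- Let X be a Polish space and φ a continuous flow on X whose periodic points form a dense subset of X. Then the set of invariant Borel probability measures with full support is a dense Gδ subset of the set M¹(X) of all invariant Borel probability measures, equipped with the weak topology. -/
open MeasureTheory Filter Topology
open scoped NNReal ENNReal

/-- A continuous flow on a topological space. -/
def IsFlow {X : Type*} [TopologicalSpace X] (φ : ℝ → X → X) : Prop :=
  Continuous (fun p : ℝ × X => φ p.1 p.2) ∧ (∀ x, φ 0 x = x) ∧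
    ∀ s t x, φ (t + s) x = φ t (φ s x)

/-- A point is periodic if it is fixed by `φ l` for some `l > 0`. -/
def IsPeriodicPt {X : Type*} (φ : ℝ → X → X) (x : X) : Prop := ∃ l > 0, φ l x = x

/-- A Borel probability measure invariant under the flow. -/
def InvariantProb {X : Type*} [MeasurableSpace X] (φ : ℝ → X → X)
    (μ : ProbabilityMeasure X) : Prop :=
  ∀ t : ℝ, ∀ A : Set X, MeasurableSet A → μ.toMeasure (φ t ⁻¹' A) = μ.toMeasure A

/-- Full support: positive mass on every nonempty open set. -/
def FullSupport {X : Type*} [TopologicalSpace X] [MeasurableSpace X]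
    (μ : ProbabilityMeasure X) : Prop :=
  ∀ U : Set X, IsOpen U → U.Nonempty → 0 < μ.toMeasure U

namespace FSAux

open Set

/-- The measure of a periodic measurable set on an interval of one period is independent
of the starting point. -/
lemma vol_periodic {S : Set ℝ} (hS : MeasurableSet S) {l : ℝ} (hl : 0 < l)
    (hper : ∀ t, t + l ∈ S ↔ t ∈ S) (a : ℝ) :
    volume (S ∩ Ioc a (a + l)) = volume (S ∩ Ioc 0 l) := by
  have hχ : Function.Periodic (S.indicator (1 : ℝ → ℝ≥0∞)) l := by
    intro t
    by_cases h : t ∈ S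
    · rw [Set.indicator_of_mem h, Set.indicator_of_mem ((hper t).mpr h)]
      rfl
    · rw [Set.indicator_of_notMem h,
        Set.indicator_of_notMem (fun hh => h ((hper t).mp hh))]
  have h := (isAddFundamentalDomain_Ioc hl a volume).setLIntegral_eq
    (isAddFundamentalDomain_Ioc hl 0 volume) (S.indicator 1) hχ.map_vadd_zmultiples
  have e : ∀ b : ℝ, ∫⁻ x in Ioc b (b + l), S.indicator (1 : ℝ → ℝ≥0∞) x ∂volume
      = volume (S ∩ Ioc b (b + l)) := by
    intro b
    rw [lintegral_indicator_one hS, Measure.restrict_apply hS]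
  rw [e a, e 0] at h
  simpa using h

section Flow

variable {X : Type*} [TopologicalSpace X] [MeasurableSpace X] [BorelSpace X]
variable {φ : ℝ → X → X}

lemma flow_cont (hflow : IsFlow φ) (t : ℝ) : Continuous (φ t) :=
  hflow.1.comp (Continuous.prodMk_right t)

lemma orbit_cont (hflow : IsFlow φ) (x : X) : Continuous (fun t => φ t x) :=
  hflow.1.comp (continuous_id.prodMk continuous_const)

/-- The uniform measure along a periodic orbit. -/
noncomputable def orbitMeasure (φ : ℝ → X → X) (x : X) (l : ℝ) : Measure X :=
  (ENNReal.ofReal l)⁻¹ • Measure.map (fun t => φ t x) (volume.restrict (Ioc 0 l))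

lemma orbitMeasure_apply (hflow : IsFlow φ) (x : X) {l : ℝ} {A : Set X}
    (hA : MeasurableSet A) :
    orbitMeasure φ x l A
      = (ENNReal.ofReal l)⁻¹ * volume ((fun t => φ t x) ⁻¹' A ∩ Ioc 0 l) := by
  rw [orbitMeasure, Measure.smul_apply, Measure.map_apply (orbit_cont hflow x).measurable hA,
    Measure.restrict_apply ((orbit_cont hflow x).measurable hA)]
  rfl

lemma orbitMeasure_univ (hflow : IsFlow φ) (x : X) {l : ℝ} (hl : 0 < l) :
    orbitMeasure φ x l univ = 1 := by
  rw [orbitMeasure_apply hflow x MeasurableSet.univ]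
  simp [Real.volume_Ioc, ENNReal.inv_mul_cancel (by simpa using hl)
    (by simp : ENNReal.ofReal l ≠ ⊤)]

lemma orbitMeasure_invariant (hflow : IsFlow φ) {x : X} {l : ℝ} (hl : 0 < l)
    (hx : φ l x = x) (s : ℝ) {A : Set X} (hA : MeasurableSet A) :
    orbitMeasure φ x l (φ s ⁻¹' A) = orbitMeasure φ x l A := by
  have hAs : MeasurableSet (φ s ⁻¹' A) := (flow_cont hflow s).measurable hA
  set g : ℝ → X := fun t => φ t x with hg
  have hSm : MeasurableSet (g ⁻¹' A) := (orbit_cont hflow x).measurable hA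
  have hper : ∀ t, t + l ∈ g ⁻¹' A ↔ t ∈ g ⁻¹' A := by
    intro t
    have : g (t + l) = g t := by
      simp only [hg, hflow.2.2 l t x, hx]
    simp [Set.mem_preimage, this]
  have key : g ⁻¹' (φ s ⁻¹' A) = (fun t => s + t) ⁻¹' (g ⁻¹' A) := by
    ext t
    have : φ (s + t) x = φ s (φ t x) := hflow.2.2 t s x
    simp [Set.mem_preimage, hg, this]
  rw [orbitMeasure_apply hflow x hAs, orbitMeasure_apply hflow x hA, key]
  congr 1
  have key2 : (fun t => s + t) ⁻¹' (g ⁻¹' A) ∩ Ioc 0 l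
      = (fun t => s + t) ⁻¹' (g ⁻¹' A ∩ Ioc s (s + l)) := by
    ext t
    simp only [Set.mem_inter_iff, Set.mem_preimage, Set.mem_Ioc]
    constructor
    · rintro ⟨h1, h2, h3⟩; exact ⟨h1, by linarith, by linarith⟩
    · rintro ⟨h1, h2, h3⟩; exact ⟨h1, by linarith, by linarith⟩
  rw [key2, measure_preimage_add, vol_periodic hSm hl hper s]

lemma orbitMeasure_pos (hflow : IsFlow φ) {x : X} {l : ℝ} (hl : 0 < l)
    (hx : φ l x = x) {U : Set X} (hU : IsOpen U) (hxU : x ∈ U) :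
    0 < orbitMeasure φ x l U := by
  rw [orbitMeasure_apply hflow x hU.measurableSet]
  apply ENNReal.mul_pos
  · simp
  · set T : Set ℝ := (fun t => φ t x) ⁻¹' U with hT
    have hTo : IsOpen T := hU.preimage (orbit_cont hflow x)
    have hlT : l ∈ T := by
      simp only [hT, Set.mem_preimage, hx]
      exact hxU
    obtain ⟨ε, hε, hball⟩ := Metric.isOpen_iff.mp hTo l hlT
    set a : ℝ := max 0 (l - ε) with ha
    have hal : a < l := by
      apply max_lt hl
      linarith
    have hsub : Ioc a l ⊆ T ∩ Ioc 0 l := by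
      intro t ht
      obtain ⟨ht1, ht2⟩ := ht
      have h0 : (0:ℝ) ≤ a := le_max_left _ _
      have hle : l - ε < t := lt_of_le_of_lt (le_max_right 0 (l - ε)) ht1
      refine ⟨hball ?_, lt_of_le_of_lt h0 ht1, ht2⟩
      rw [Metric.mem_ball, Real.dist_eq, abs_lt]
      constructor <;> linarith
    have : (0 : ℝ≥0∞) < volume (Ioc a l) := by
      simp [Real.volume_Ioc, hal]
    exact (lt_of_lt_of_le this (measure_mono hsub)).ne'


/-- A countable convex combination of orbit measures. -/
noncomputable def mixMeasure (φ : ℝ → X → X) (x : ℕ → X) (l : ℕ → ℝ) : Measure X :=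
  Measure.sum (fun n => ((2 : ℝ≥0∞)⁻¹ ^ (n + 1)) • orbitMeasure φ (x n) (l n))

lemma tsum_half : ∑' n : ℕ, ((2 : ℝ≥0∞)⁻¹) ^ (n + 1) = 1 := by
  have h : ∀ n : ℕ, ((2 : ℝ≥0∞)⁻¹) ^ (n + 1) = 2⁻¹ * (2⁻¹) ^ n := fun n => pow_succ' _ _
  simp_rw [h]
  rw [ENNReal.tsum_mul_left, ENNReal.tsum_geometric, ENNReal.one_sub_inv_two, inv_inv,
    ENNReal.inv_mul_cancel two_ne_zero ENNReal.ofNat_ne_top]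

variable (x : ℕ → X) (l : ℕ → ℝ)

lemma mixMeasure_apply {A : Set X} (hA : MeasurableSet A) :
    mixMeasure φ x l A = ∑' n, ((2 : ℝ≥0∞)⁻¹) ^ (n + 1) * orbitMeasure φ (x n) (l n) A := by
  rw [mixMeasure, Measure.sum_apply _ hA]
  rfl

lemma mixMeasure_univ (hflow : IsFlow φ) (hl : ∀ n, 0 < l n) :
    mixMeasure φ x l univ = 1 := by
  rw [mixMeasure_apply x l MeasurableSet.univ]
  have : ∀ n, orbitMeasure φ (x n) (l n) univ = 1 := fun n => orbitMeasure_univ hflow _ (hl n)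
  simp_rw [this, mul_one]
  exact tsum_half

lemma mixMeasure_invariant (hflow : IsFlow φ) (hl : ∀ n, 0 < l n) (hfix : ∀ n, φ (l n) (x n) = x n)
    (s : ℝ) {A : Set X} (hA : MeasurableSet A) :
    mixMeasure φ x l (φ s ⁻¹' A) = mixMeasure φ x l A := by
  rw [mixMeasure_apply x l ((flow_cont hflow s).measurable hA), mixMeasure_apply x l hA]
  exact tsum_congr fun n => by
    rw [orbitMeasure_invariant hflow (hl n) (hfix n) s hA]

lemma mixMeasure_pos (hflow : IsFlow φ) (hl : ∀ n, 0 < l n) (hfix : ∀ n, φ (l n) (x n) = x n)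
    {U : Set X} (hU : IsOpen U) {n : ℕ} (hn : x n ∈ U) :
    0 < mixMeasure φ x l U := by
  rw [mixMeasure_apply x l hU.measurableSet]
  refine lt_of_lt_of_le ?_ (ENNReal.le_tsum n)
  exact ENNReal.mul_pos (by simp) (orbitMeasure_pos hflow (hl n) (hfix n) hU hn).ne'

end Flow

/-- For an open set `U`, having positive measure on `U` is an open condition in the
topology of weak convergence. -/
lemma isOpen_pos_measure {Y : Type*} [MeasurableSpace Y] [PseudoEMetricSpace Y]
    [OpensMeasurableSpace Y] {U : Set Y} (hU : IsOpen U) :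
    IsOpen {μ : ProbabilityMeasure Y | 0 < μ.toMeasure U} := by
  rw [← isClosed_compl_iff]
  have hset : {μ : ProbabilityMeasure Y | 0 < μ.toMeasure U}ᶜ
      = {μ : ProbabilityMeasure Y | μ.toMeasure U = 0} := by
    ext μ
    simp [pos_iff_ne_zero]
  rw [hset]
  rw [isClosed_iff_clusterPt]
  intro μ hμ
  haveI : (𝓝 μ ⊓ 𝓟 {ν : ProbabilityMeasure Y | ν.toMeasure U = 0}).NeBot := hμ
  have ht : Tendsto id (𝓝 μ ⊓ 𝓟 {ν : ProbabilityMeasure Y | ν.toMeasure U = 0}) (𝓝 μ) :=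
    tendsto_id.mono_left inf_le_left
  have key := ProbabilityMeasure.le_liminf_measure_open_of_tendsto ht hU
  have hev : ∀ᶠ ν in 𝓝 μ ⊓ 𝓟 {ν : ProbabilityMeasure Y | ν.toMeasure U = 0},
      (fun ν : ProbabilityMeasure Y => (ν : Measure Y) U) (id ν) = (fun _ => (0:ℝ≥0∞)) ν := by
    refine eventually_inf_principal.mpr (Eventually.of_forall fun ν hν => hν)
  rw [liminf_congr hev, liminf_const] at key
  exact le_antisymm key zero_le

end FSAux

/-- On a Polish space, if the periodic points of a continuous flow are dense, then
the invariant Borel probability measures of full support form a dense Gδ subset of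
the set of all invariant Borel probability measures with the weak topology. -/
theorem fullSupport_dense_Gδ_in_invariant
    {X : Type*} [TopologicalSpace X] [PolishSpace X] [MeasurableSpace X] [BorelSpace X]
    (φ : ℝ → X → X) (hflow : IsFlow φ)
    (hper : Dense {x : X | IsPeriodicPt φ x}) :
    Dense {μ : {m : ProbabilityMeasure X // InvariantProb φ m} | FullSupport μ.1} ∧
    IsGδ {μ : {m : ProbabilityMeasure X // InvariantProb φ m} | FullSupport μ.1} := by
  constructor
  · -- Density
    intro p
    obtain ⟨μ₀, hμ₀⟩ := p
    haveI hne : Nonempty X := μ₀.nonempty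
    -- a countable dense set of periodic points
    set P : Set X := {x : X | IsPeriodicPt φ x} with hP
    haveI hPne : Nonempty ↥P := (hper.nonempty).to_subtype
    obtain ⟨D, hDc, hDd⟩ := TopologicalSpace.exists_countable_dense ↥P
    obtain ⟨f, hf⟩ := hDc.exists_eq_range hDd.nonempty
    have hfper : ∀ n, IsPeriodicPt φ (f n : X) := fun n => (f n).2
    choose l hl hfix using hfper
    set x : ℕ → X := fun n => (f n : X) with hx
    -- every nonempty open set contains some `x n`
    have hdense : ∀ U : Set X, IsOpen U → U.Nonempty → ∃ n, x n ∈ U := by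
      intro U hUo hUne
      obtain ⟨p, hpP, hpU⟩ := hper.exists_mem_open hUo hUne
      have hVo : IsOpen (Subtype.val ⁻¹' U : Set ↥P) := hUo.preimage continuous_subtype_val
      have hVne : (Subtype.val ⁻¹' U : Set ↥P).Nonempty := ⟨⟨p, hpP⟩, hpU⟩
      obtain ⟨d, hdD, hdV⟩ := hDd.exists_mem_open hVo hVne
      rw [hf] at hdD
      obtain ⟨n, rfl⟩ := hdD
      exact ⟨n, hdV⟩
    -- the full-support invariant reference measure
    set ν : Measure X := FSAux.mixMeasure φ x l with hν
    have hνuniv : ν Set.univ = 1 := FSAux.mixMeasure_univ x l hflow hl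
    haveI hνprob : IsProbabilityMeasure ν := ⟨hνuniv⟩
    have hνinv : ∀ s : ℝ, ∀ A : Set X, MeasurableSet A → ν (φ s ⁻¹' A) = ν A :=
      fun s A hA => FSAux.mixMeasure_invariant x l hflow hl hfix s hA
    have hνpos : ∀ U : Set X, IsOpen U → U.Nonempty → 0 < ν U := by
      intro U hUo hUne
      obtain ⟨n, hn⟩ := hdense U hUo hUne
      exact FSAux.mixMeasure_pos x l hflow hl hfix hUo hn
    -- the interpolating sequence
    set b : ℕ → ℝ≥0∞ := fun k => ((k : ℝ≥0∞) + 2)⁻¹ with hb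
    have hbne : ∀ k, b k ≠ 0 := by
      intro k
      simp [hb, ENNReal.inv_ne_zero]
    have hbtop : ∀ k, b k ≠ ⊤ := by
      intro k
      simp [hb]
    have hble : ∀ k, b k ≤ 1 := by
      intro k
      rw [hb]
      refine ENNReal.inv_le_one.mpr ?_
      calc (1:ℝ≥0∞) ≤ 2 := one_le_two
      _ ≤ (k : ℝ≥0∞) + 2 := le_add_self
    set m : ℕ → Measure X := fun k => (1 - b k) • μ₀.toMeasure + b k • ν with hm
    have hmprob : ∀ k, IsProbabilityMeasure (m k) := by
      intro k
      constructor
      rw [hm]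
      simp only [Measure.add_apply, Measure.smul_apply, smul_eq_mul, measure_univ, mul_one]
      exact tsub_add_cancel_of_le (hble k)
    have hminv : ∀ k, InvariantProb φ ⟨m k, hmprob k⟩ := by
      intro k t A hA
      show m k (φ t ⁻¹' A) = m k A
      rw [hm]
      simp only [Measure.add_apply, Measure.smul_apply, smul_eq_mul]
      rw [hνinv t A hA, hμ₀ t A hA]
    have hmfull : ∀ k, FullSupport (⟨⟨m k, hmprob k⟩, hminv k⟩ :
        {m : ProbabilityMeasure X // InvariantProb φ m}).1 := by
      intro k U hUo hUne
      show (0:ℝ≥0∞) < m k U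
      have h1 : 0 < b k * ν U := ENNReal.mul_pos (hbne k) (hνpos U hUo hUne).ne'
      refine lt_of_lt_of_le h1 ?_
      rw [hm]
      simp only [Measure.add_apply, Measure.smul_apply, smul_eq_mul]
      exact le_add_self
    -- convergence
    have hbto : Tendsto (fun k => (b k).toReal) atTop (𝓝 0) := by
      have h1 : ∀ k : ℕ, (b k).toReal = ((k : ℝ) + 2)⁻¹ := by
        intro k
        rw [hb]
        simp [ENNReal.toReal_inv,
          ENNReal.toReal_add (ENNReal.natCast_ne_top k) ENNReal.ofNat_ne_top]
      simp_rw [h1]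
      exact tendsto_inv_atTop_zero.comp
        (tendsto_atTop_add_const_right _ 2 tendsto_natCast_atTop_atTop)
    let μseq : ℕ → ProbabilityMeasure X := fun k => ⟨m k, hmprob k⟩
    have htend : Tendsto μseq atTop (𝓝 μ₀) := by
      refine ProbabilityMeasure.tendsto_iff_forall_integral_tendsto.mpr fun g => ?_
      have hint : ∀ k, ∫ ω, g ω ∂(m k)
          = (1 - b k).toReal * ∫ ω, g ω ∂μ₀.toMeasure + (b k).toReal * ∫ ω, g ω ∂ν := by
        intro k
        have h1 : Integrable g ((1 - b k) • μ₀.toMeasure) :=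
          (g.integrable _).smul_measure (by
            exact ne_top_of_le_ne_top ENNReal.one_ne_top (tsub_le_self))
        have h2 : Integrable g (b k • ν) := (g.integrable _).smul_measure (hbtop k)
        show ∫ ω, g ω ∂((1 - b k) • μ₀.toMeasure + b k • ν) = _
        rw [integral_add_measure h1 h2, integral_smul_measure, integral_smul_measure]
        rfl
      have hconv : Tendsto
          (fun k => (1 - b k).toReal * ∫ ω, g ω ∂μ₀.toMeasure + (b k).toReal * ∫ ω, g ω ∂ν)
          atTop (𝓝 (∫ ω, g ω ∂μ₀.toMeasure)) := by
        have hone : Tendsto (fun k => (1 - b k).toReal) atTop (𝓝 1) := by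
          have : ∀ k, (1 - b k).toReal = 1 - (b k).toReal := by
            intro k
            rw [ENNReal.toReal_sub_of_le (hble k) ENNReal.one_ne_top]
            simp
          simp_rw [this]
          simpa using tendsto_const_nhds.sub hbto
        have := (hone.mul (tendsto_const_nhds (x := ∫ ω, g ω ∂μ₀.toMeasure))).add
          (hbto.mul (tendsto_const_nhds (x := ∫ ω, g ω ∂ν)))
        simpa using this
      have heq : (fun k => ∫ ω, g ω ∂((μseq k : ProbabilityMeasure X) : Measure X))
          = fun k => (1 - b k).toReal * ∫ ω, g ω ∂μ₀.toMeasure + (b k).toReal * ∫ ω, g ω ∂ν := by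
        funext k
        exact hint k
      rw [heq]
      exact hconv
    have htendsub : Tendsto (fun k =>
        (⟨⟨m k, hmprob k⟩, hminv k⟩ : {m : ProbabilityMeasure X // InvariantProb φ m}))
        atTop (𝓝 ⟨μ₀, hμ₀⟩) := tendsto_subtype_rng.mpr htend
    exact mem_closure_of_tendsto htendsub (Eventually.of_forall fun k => hmfull k)
  · -- Gδ
    letI := TopologicalSpace.upgradeIsCompletelyMetrizable X
    obtain ⟨B, hBc, hBne, hBb⟩ := TopologicalSpace.exists_countable_basis X
    have hkey : {μ : {m : ProbabilityMeasure X // InvariantProb φ m} | FullSupport μ.1}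
        = ⋂ U ∈ B, {μ : {m : ProbabilityMeasure X // InvariantProb φ m} |
            0 < μ.1.toMeasure U} := by
      ext μ
      simp only [Set.mem_setOf_eq, Set.mem_iInter]
      constructor
      · intro h U hU
        exact h U (hBb.isOpen hU) (Set.nonempty_iff_ne_empty.mpr fun he => hBne (he ▸ hU))
      · intro h U hUo hUne
        obtain ⟨p, hpU⟩ := hUne
        obtain ⟨V, hVB, hpV, hVU⟩ := hBb.exists_subset_of_mem_open hpU hUo
        exact lt_of_lt_of_le (h V hVB) (measure_mono hVU)
    rw [hkey]
    refine IsGδ.biInter hBc fun U hU => IsOpen.isGδ ?_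
    have : IsOpen {ν : ProbabilityMeasure X | 0 < ν.toMeasure U} :=
      FSAux.isOpen_pos_measure (hBb.isOpen hU)
    exact this.preimage continuous_subtype_val
end

section
/- Let X be a Polish space, φ a continuous flow on X, and U ⊆ X a nonempty open set containing a periodic point of the flow. Then the set of invariant Borel probability measures μ with μ(U) = 0 is a closed subset with empty interior in the set M¹(X) of all invariant Borel probability measures with the weak topology. -/
open MeasureTheory Filter Topology
open scoped ENNReal NNReal

/-- Lebesgue measure of the intersection of an `l`-periodic set with an interval of
length `l` does not depend on the left endpoint. -/
lemma periodic_set_inter_Ioc {l : ℝ} (hl : 0 < l) {B : Set ℝ} (hB : MeasurableSet B)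
    (hper : ∀ s, s + l ∈ B ↔ s ∈ B) (t : ℝ) :
    volume (B ∩ Set.Ioc t (t + l)) = volume (B ∩ Set.Ioc 0 (0 + l)) := by
  haveI : VAddInvariantMeasure (AddSubgroup.zmultiples l) ℝ volume :=
    ⟨fun c s _ => measure_preimage_add _ _ _⟩
  have hperiodic : Function.Periodic (B.indicator (1 : ℝ → ℝ≥0∞)) l := by
    intro s
    by_cases h : s ∈ B
    · rw [Set.indicator_of_mem ((hper s).2 h), Set.indicator_of_mem h]; rfl
    · rw [Set.indicator_of_notMem (fun hc => h ((hper s).1 hc)), Set.indicator_of_notMem h]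
  have h1 := (isAddFundamentalDomain_Ioc hl t).setLIntegral_eq
      (isAddFundamentalDomain_Ioc hl 0) (B.indicator 1)
      (fun g x => hperiodic.map_vadd_zmultiples g x)
  rwa [lintegral_indicator_one hB, lintegral_indicator_one hB,
    Measure.restrict_apply hB, Measure.restrict_apply hB] at h1

/-- On a Polish space, if a nonempty open set `U` contains a periodic point of a
continuous flow, then the invariant Borel probability measures vanishing on `U`
form a closed subset with empty interior in the set of all invariant Borel
probability measures with the weak topology. -/
theorem measures_vanishing_on_open_isClosed_empty_interior
    {X : Type*} [TopologicalSpace X] [PolishSpace X] [MeasurableSpace X] [BorelSpace X]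
    (φ : ℝ → X → X) (hflow : IsFlow φ)
    (U : Set X) (hU : IsOpen U) (hUne : U.Nonempty)
    (hper : ∃ x ∈ U, IsPeriodicPt φ x) :
    IsClosed {μ : {m : ProbabilityMeasure X // InvariantProb φ m} | μ.1.toMeasure U = 0} ∧
    interior {μ : {m : ProbabilityMeasure X // InvariantProb φ m} | μ.1.toMeasure U = 0}
      = ∅ := by
  classical
  obtain ⟨hcont, hzero, haddf⟩ := hflow
  obtain ⟨x, hxU, l, hl, hfix⟩ := hper
  letI := TopologicalSpace.upgradeIsCompletelyMetrizable X
  -- continuity facts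
  have hFcont : Continuous fun t : ℝ => φ t x :=
    hcont.comp (continuous_id.prodMk continuous_const)
  have hφcont : ∀ t : ℝ, Continuous (φ t) := fun t =>
    hcont.comp (continuous_const.prodMk continuous_id)
  set F : ℝ → X := fun t => φ t x with hF
  have hFm : Measurable F := hFcont.measurable
  have hFper : ∀ t, F (t + l) = F t := fun t => by
    show φ (t + l) x = φ t x
    rw [haddf l t x, hfix]
  -- the normalized measure on [0, l]
  set c : ℝ≥0∞ := (ENNReal.ofReal l)⁻¹ with hc
  have hcne0 : c ≠ 0 := by
    simp [hc, ENNReal.inv_ne_zero]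
  have hcnetop : ENNReal.ofReal l ≠ 0 := ne_of_gt (ENNReal.ofReal_pos.mpr hl)
  set m : Measure ℝ := c • volume.restrict (Set.Ioc 0 l) with hm
  have m_apply : ∀ B : Set ℝ, MeasurableSet B → m B = c * volume (B ∩ Set.Ioc 0 l) := by
    intro B hBm
    rw [hm, Measure.smul_apply, Measure.restrict_apply hBm, smul_eq_mul]
  have m_univ : m Set.univ = 1 := by
    rw [m_apply _ MeasurableSet.univ, Set.univ_inter, Real.volume_Ioc, sub_zero, hc,
      ENNReal.inv_mul_cancel hcnetop ENNReal.ofReal_ne_top]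
  -- the orbit measure
  set ν : Measure X := m.map F with hν
  have ν_apply : ∀ A : Set X, MeasurableSet A → ν A = m (F ⁻¹' A) := fun A hA =>
    Measure.map_apply hFm hA
  have νprob : IsProbabilityMeasure ν := by
    constructor
    rw [ν_apply _ MeasurableSet.univ, Set.preimage_univ, m_univ]
  -- invariance of ν
  have hνinv : ∀ t (A : Set X), MeasurableSet A → ν (φ t ⁻¹' A) = ν A := by
    intro t A hA
    have hBm : MeasurableSet (F ⁻¹' A) := hFm hA
    have hBper : ∀ s, s + l ∈ F ⁻¹' A ↔ s ∈ F ⁻¹' A := fun s => by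
      simp only [Set.mem_preimage, hFper s]
    have hpre : F ⁻¹' (φ t ⁻¹' A) = (fun s => t + s) ⁻¹' (F ⁻¹' A) := by
      ext s
      simp only [Set.mem_preimage, hF]
      rw [← haddf s t x]
    have hIoc : (fun s => t + s) ⁻¹' Set.Ioc t (t + l) = Set.Ioc 0 l := by
      rw [Set.preimage_const_add_Ioc]
      simp
    rw [ν_apply _ ((hφcont t).measurable hA), ν_apply _ hA, hpre,
      m_apply _ (measurable_const_add t hBm), m_apply _ hBm]
    congr 1
    have : (fun s => t + s) ⁻¹' (F ⁻¹' A) ∩ Set.Ioc 0 l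
        = (fun s => t + s) ⁻¹' ((F ⁻¹' A) ∩ Set.Ioc t (t + l)) := by
      rw [Set.preimage_inter, hIoc]
    rw [this, measure_preimage_add,
      periodic_set_inter_Ioc hl hBm hBper t, zero_add]
  -- ν gives positive mass to U
  have hνU : ν U ≠ 0 := by
    rw [ν_apply _ hU.measurableSet, m_apply _ (hFm hU.measurableSet)]
    have h0 : (0 : ℝ) ∈ F ⁻¹' U := by
      simp only [Set.mem_preimage, hF, hzero, hxU]
    obtain ⟨δ, hδ, hball⟩ := Metric.isOpen_iff.mp (hU.preimage hFcont) 0 h0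
    have hsub : Set.Ioo 0 (min δ l) ⊆ F ⁻¹' U ∩ Set.Ioc 0 l := by
      intro s hs
      obtain ⟨hs1, hs2⟩ := hs
      constructor
      · apply hball
        rw [Metric.mem_ball, Real.dist_eq, sub_zero, abs_of_pos hs1]
        exact lt_of_lt_of_le hs2 (min_le_left _ _)
      · exact ⟨hs1, le_of_lt (lt_of_lt_of_le hs2 (min_le_right _ _))⟩
    have hpos : 0 < volume (F ⁻¹' U ∩ Set.Ioc 0 l) := by
      calc (0 : ℝ≥0∞) < volume (Set.Ioo 0 (min δ l)) := by
            rw [Real.volume_Ioo]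
            simp [ENNReal.ofReal_pos, hδ, hl]
        _ ≤ _ := measure_mono hsub
    exact mul_ne_zero hcne0 (ne_of_gt hpos)
  have hνUtop : ν U ≠ ∞ := measure_ne_top ν U
  set S := {μ : {m : ProbabilityMeasure X // InvariantProb φ m} | μ.1.toMeasure U = 0} with hS
  -- Closedness
  have hclosed : IsClosed S := by
    apply IsSeqClosed.isClosed
    intro seq μ hmem htend
    have htend' : Tendsto (fun n => (seq n).1) atTop (𝓝 μ.1) := by
      exact ((continuous_subtype_val.tendsto μ).comp htend)
    have hle := ProbabilityMeasure.le_liminf_measure_open_of_tendsto htend' hU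
    simp only [hS, Set.mem_setOf_eq] at hmem ⊢
    have : (Filter.liminf (fun n => (seq n).1.toMeasure U) atTop) = 0 := by
      have : (fun n => (seq n).1.toMeasure U) = fun _ => 0 := funext hmem
      rw [this, liminf_const]
    exact le_antisymm (this ▸ hle) zero_le
  refine ⟨hclosed, ?_⟩
  -- Empty interior
  rw [Set.eq_empty_iff_forall_notMem]
  intro μ hμint
  have hμS : μ ∈ S := interior_subset hμint
  simp only [hS, Set.mem_setOf_eq] at hμS
  -- the approximating sequence
  set b : ℕ → ℝ≥0∞ := fun n => (((n : ℝ≥0∞)) + 1)⁻¹ with hb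
  have hbne0 : ∀ n, b n ≠ 0 := fun n =>
    ENNReal.inv_ne_zero.mpr (ENNReal.add_ne_top.mpr ⟨ENNReal.natCast_ne_top n, ENNReal.one_ne_top⟩)
  have hb1 : ∀ n, b n ≤ 1 := fun n => by
    rw [hb]
    simp only
    rw [ENNReal.inv_le_one]
    exact le_add_self
  set a : ℕ → ℝ≥0∞ := fun n => 1 - b n with ha
  have hab : ∀ n, a n + b n = 1 := fun n => tsub_add_cancel_of_le (hb1 n)
  have hane_top : ∀ n, a n ≠ ∞ := fun n => by
    rw [ha]; exact (tsub_le_self.trans_lt ENNReal.one_lt_top).ne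
  set ρm : ℕ → Measure X := fun n => a n • μ.1.toMeasure + b n • ν with hρm
  have ρm_apply : ∀ n (A : Set X), ρm n A = a n * μ.1.toMeasure A + b n * ν A := by
    intro n A
    rw [hρm]
    simp [Measure.add_apply, Measure.smul_apply, smul_eq_mul]
  have ρprob : ∀ n, IsProbabilityMeasure (ρm n) := fun n => by
    constructor
    rw [ρm_apply n Set.univ]
    simp only [measure_univ, mul_one]
    exact hab n
  have ρinv : ∀ n, ∀ t (A : Set X), MeasurableSet A → ρm n (φ t ⁻¹' A) = ρm n A := by
    intro n t A hA
    rw [ρm_apply, ρm_apply, μ.2 t A hA, hνinv t A hA]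
  set ρ : ℕ → {m : ProbabilityMeasure X // InvariantProb φ m} := fun n =>
    ⟨⟨ρm n, ρprob n⟩, fun t A hA => ρinv n t A hA⟩ with hρ
  have hρnotS : ∀ n, ρ n ∉ S := by
    intro n hn
    simp only [hS, Set.mem_setOf_eq, hρ] at hn
    have hn' : ρm n U = 0 := hn
    rw [ρm_apply, hμS, mul_zero, zero_add] at hn'
    exact (mul_ne_zero (hbne0 n) hνU) hn'
  -- convergence ρ → μ
  have hbtend : Tendsto b atTop (𝓝 0) := by
    have : b = (fun n : ℕ => ((n : ℝ≥0∞))⁻¹) ∘ (fun n => n + 1) := by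
      funext n; simp [hb]
    rw [this]
    exact ENNReal.tendsto_inv_nat_nhds_zero.comp (tendsto_add_atTop_nat 1)
  have hatend : Tendsto a atTop (𝓝 1) := by
    have := ENNReal.Tendsto.sub (tendsto_const_nhds : Tendsto (fun _ : ℕ => (1:ℝ≥0∞)) atTop (𝓝 1))
      hbtend (Or.inl ENNReal.one_ne_top)
    simpa using this
  have htend : Tendsto ρ atTop (𝓝 μ) := by
    rw [hρ, tendsto_subtype_rng]
    rw [ProbabilityMeasure.tendsto_iff_forall_lintegral_tendsto]
    intro f
    have hIμ : ∫⁻ ω, f ω ∂(μ.1 : Measure X) ≠ ∞ := f.lintegral_lt_top_of_nnreal _ |>.ne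
    have hIν : ∫⁻ ω, f ω ∂ν ≠ ∞ := f.lintegral_lt_top_of_nnreal _ |>.ne
    have heq : ∀ n, ∫⁻ ω, f ω ∂(ρm n) =
        a n * ∫⁻ ω, f ω ∂(μ.1 : Measure X) + b n * ∫⁻ ω, f ω ∂ν := by
      intro n
      rw [hρm]
      simp only
      rw [lintegral_add_measure, lintegral_smul_measure, lintegral_smul_measure, smul_eq_mul, smul_eq_mul]
    have h1 : Tendsto (fun n => a n * ∫⁻ ω, f ω ∂(μ.1 : Measure X)) atTop
        (𝓝 (1 * ∫⁻ ω, f ω ∂(μ.1 : Measure X))) :=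
      ENNReal.Tendsto.mul_const hatend (Or.inl one_ne_zero)
    have h2 : Tendsto (fun n => b n * ∫⁻ ω, f ω ∂ν) atTop (𝓝 (0 * ∫⁻ ω, f ω ∂ν)) :=
      ENNReal.Tendsto.mul_const hbtend (Or.inr hIν)
    have hsum := h1.add h2
    rw [one_mul, zero_mul, add_zero] at hsum
    exact hsum.congr fun n => (heq n).symm
  have hev : ∀ᶠ n in atTop, ρ n ∈ interior S :=
    htend.eventually_mem (isOpen_interior.mem_nhds hμint)
  obtain ⟨n, hn⟩ := hev.exists
  exact hρnotS n (interior_subset hn)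
end

section
/- Let X be a Polish space and T : X → X a continuous map whose periodic points form a dense subset of X. Then the set of T-invariant Borel probability measures with full support is a dense Gδ subset of the set of all T-invariant Borel probability measures, equipped with the weak topology. -/
open MeasureTheory Filter Topology

/-- A Borel probability measure invariant under a map `T`. -/
def InvariantProbMap {X : Type*} [MeasurableSpace X] (T : X → X)
    (μ : ProbabilityMeasure X) : Prop :=
  ∀ A : Set X, MeasurableSet A → μ.toMeasure (T ⁻¹' A) = μ.toMeasure A

open scoped ENNReal

section OrbitMeasure

variable {X : Type*} [MeasurableSpace X] [MeasurableSingletonClass X]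

/-- The uniform measure on the (first `p` points of the) orbit of `x`. -/
noncomputable def orbitMeasure (T : X → X) (x : X) (p : ℕ) : Measure X :=
  (p : ℝ≥0∞)⁻¹ • ∑ i ∈ Finset.range p, Measure.dirac (T^[i] x)

lemma orbitMeasure_apply (T : X → X) (x : X) (p : ℕ) (A : Set X) :
    orbitMeasure T x p A
      = (p : ℝ≥0∞)⁻¹ * ∑ i ∈ Finset.range p, A.indicator 1 (T^[i] x) := by
  simp [orbitMeasure, Measure.smul_apply, Measure.finset_sum_apply,
    Measure.dirac_apply, smul_eq_mul]

lemma orbitMeasure_univ (T : X → X) (x : X) {p : ℕ} (hp : 1 ≤ p) :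
    orbitMeasure T x p Set.univ = 1 := by
  rw [orbitMeasure_apply]
  simp only [Set.indicator_univ, Pi.one_apply, Finset.sum_const, Finset.card_range,
    nsmul_eq_mul, mul_one]
  exact ENNReal.inv_mul_cancel (Nat.cast_ne_zero.mpr (Nat.one_le_iff_ne_zero.mp hp))
    (ENNReal.natCast_ne_top p)

lemma orbitMeasure_preimage (T : X → X) (x : X) {p : ℕ} (hx : T^[p] x = x) (A : Set X) :
    orbitMeasure T x p (T ⁻¹' A) = orbitMeasure T x p A := by
  rw [orbitMeasure_apply, orbitMeasure_apply]
  congr 1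
  set g : ℕ → ℝ≥0∞ := fun i => A.indicator 1 (T^[i] x) with hg
  have h1 : ∀ i, (T ⁻¹' A).indicator (1 : X → ℝ≥0∞) (T^[i] x) = g (i + 1) := by
    intro i
    rw [hg]
    simp only [Function.iterate_succ_apply']
    rfl
  have hgp : g p = g 0 := by simp [hg, hx]
  have hg0 : g 0 ≠ ∞ := by
    by_cases h : (T^[0] x) ∈ A
    · simp [hg, Set.indicator_of_mem h]
    · simp [hg, Set.indicator_of_notMem h]
  calc ∑ i ∈ Finset.range p, (T ⁻¹' A).indicator (1 : X → ℝ≥0∞) (T^[i] x)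
      = ∑ i ∈ Finset.range p, g (i + 1) := by
        exact Finset.sum_congr rfl fun i _ => h1 i
    _ = ∑ i ∈ Finset.range p, g i := by
        have h2 : (∑ i ∈ Finset.range p, g (i + 1)) + g 0
            = (∑ i ∈ Finset.range p, g i) + g 0 := by
          rw [← Finset.sum_range_succ' g p, Finset.sum_range_succ, hgp]
        exact WithTop.add_right_cancel hg0 h2

lemma orbitMeasure_pos (T : X → X) {x : X} {p : ℕ} (hp : 1 ≤ p) {U : Set X} (hx : x ∈ U) :
    (p : ℝ≥0∞)⁻¹ ≤ orbitMeasure T x p U := by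
  rw [orbitMeasure_apply]
  have h0 : (0 : ℕ) ∈ Finset.range p := Finset.mem_range.mpr hp
  have hterm : (1 : ℝ≥0∞) = U.indicator 1 (T^[0] x) := by
    simp [Set.indicator_apply, hx]
  calc (p : ℝ≥0∞)⁻¹ = (p : ℝ≥0∞)⁻¹ * 1 := (mul_one _).symm
    _ ≤ (p : ℝ≥0∞)⁻¹ * ∑ i ∈ Finset.range p, U.indicator 1 (T^[i] x) := by
        apply mul_le_mul_right
        rw [hterm]
        exact Finset.single_le_sum
          (f := fun i => U.indicator (1 : X → ℝ≥0∞) (T^[i] x)) (fun i _ => zero_le) h0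

end OrbitMeasure

section NuMeasure

variable {X : Type*} [MeasurableSpace X] [MeasurableSingletonClass X]

/-- A convex combination of the orbit measures of countably many periodic points. -/
noncomputable def nuMeasure (T : X → X) (x : ℕ → X) (p : ℕ → ℕ) : Measure X :=
  Measure.sum fun n => ((2 : ℝ≥0∞) ^ (n + 1))⁻¹ • orbitMeasure T (x n) (p n)

lemma nuMeasure_apply (T : X → X) (x : ℕ → X) (p : ℕ → ℕ) {A : Set X}
    (hA : MeasurableSet A) :
    nuMeasure T x p A = ∑' n, ((2 : ℝ≥0∞) ^ (n + 1))⁻¹ * orbitMeasure T (x n) (p n) A := by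
  rw [nuMeasure, Measure.sum_apply _ hA]
  simp [Measure.smul_apply, smul_eq_mul]

lemma tsum_two_pow_inv : (∑' n : ℕ, ((2 : ℝ≥0∞) ^ (n + 1))⁻¹) = 1 := by
  have h : ∀ n : ℕ, ((2 : ℝ≥0∞) ^ (n + 1))⁻¹ = (2 : ℝ≥0∞)⁻¹ ^ n * 2⁻¹ := by
    intro n
    rw [ENNReal.inv_pow, pow_succ]
  simp only [h]
  rw [ENNReal.tsum_mul_right, ENNReal.tsum_geometric, ENNReal.one_sub_inv_two, inv_inv]
  exact ENNReal.mul_inv_cancel two_ne_zero ENNReal.ofNat_ne_top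

lemma nuMeasure_univ (T : X → X) (x : ℕ → X) {p : ℕ → ℕ} (hp : ∀ n, 1 ≤ p n) :
    nuMeasure T x p Set.univ = 1 := by
  rw [nuMeasure_apply T x p MeasurableSet.univ]
  have : ∀ n : ℕ, ((2 : ℝ≥0∞) ^ (n + 1))⁻¹ * orbitMeasure T (x n) (p n) Set.univ
      = ((2 : ℝ≥0∞) ^ (n + 1))⁻¹ := by
    intro n
    rw [orbitMeasure_univ T (x n) (hp n), mul_one]
  simp only [this]
  exact tsum_two_pow_inv

lemma nuMeasure_preimage (T : X → X) (x : ℕ → X) (p : ℕ → ℕ)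
    (hx : ∀ n, T^[p n] (x n) = x n) (hT : Measurable T) {A : Set X}
    (hA : MeasurableSet A) :
    nuMeasure T x p (T ⁻¹' A) = nuMeasure T x p A := by
  rw [nuMeasure_apply T x p (hT hA), nuMeasure_apply T x p hA]
  exact tsum_congr fun n => by rw [orbitMeasure_preimage T (x n) (hx n) A]

lemma nuMeasure_pos [TopologicalSpace X] [OpensMeasurableSpace X]
    (T : X → X) {x : ℕ → X} {p : ℕ → ℕ} (hp : ∀ n, 1 ≤ p n)
    (hdense : Dense (Set.range x)) {U : Set X} (hU : IsOpen U) (hUne : U.Nonempty) :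
    0 < nuMeasure T x p U := by
  obtain ⟨y, hyx, hyU⟩ := hdense.exists_mem_open hU hUne
  obtain ⟨n, rfl⟩ := hyx
  have hle : ((2 : ℝ≥0∞) ^ (n + 1))⁻¹ * orbitMeasure T (x n) (p n) U ≤ nuMeasure T x p U := by
    rw [nuMeasure_apply T x p hU.measurableSet]
    exact ENNReal.le_tsum n
  refine lt_of_lt_of_le ?_ hle
  apply ENNReal.mul_pos
  · exact ENNReal.inv_ne_zero.mpr (ENNReal.pow_ne_top ENNReal.ofNat_ne_top)
  · have h := orbitMeasure_pos T (hp n) hyU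
    have hpos : (0 : ℝ≥0∞) < ((p n : ℝ≥0∞))⁻¹ :=
      ENNReal.inv_pos.mpr (ENNReal.natCast_ne_top _)
    exact (lt_of_lt_of_le hpos h).ne'

end NuMeasure

section OpenSet

variable {X : Type*} [TopologicalSpace X] [PolishSpace X] [MeasurableSpace X] [BorelSpace X]

lemma isOpen_pos_prob (U : Set X) (hU : IsOpen U) :
    IsOpen {ν : ProbabilityMeasure X | 0 < ν.toMeasure U} := by
  rw [← isClosed_compl_iff]
  have hcompl : {ν : ProbabilityMeasure X | 0 < ν.toMeasure U}ᶜ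
      = {ν : ProbabilityMeasure X | ν.toMeasure Uᶜ = 1} := by
    ext ν
    simp [not_lt, le_zero_iff, prob_compl_eq_one_iff hU.measurableSet]
  rw [hcompl]
  apply IsSeqClosed.isClosed
  intro νs ν hmem hlim
  have key := ProbabilityMeasure.limsup_measure_closed_le_of_tendsto hlim hU.isClosed_compl
  have hlimsup : (Filter.limsup (fun n => (νs n : Measure X) Uᶜ) atTop) = 1 := by
    have : (fun n => (νs n : Measure X) Uᶜ) = fun _ => (1 : ℝ≥0∞) := funext fun n => hmem n
    rw [this, limsup_const]
  show (ν : Measure X) Uᶜ = 1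
  exact le_antisymm prob_le_one (hlimsup ▸ key)

end OpenSet

/-- On a Polish space, if the periodic points of a continuous map `T` are dense,
then the `T`-invariant Borel probability measures of full support form a dense Gδ
subset of the set of all `T`-invariant Borel probability measures with the weak
topology. -/
theorem fullSupport_dense_Gδ_in_invariant_map
    {X : Type*} [TopologicalSpace X] [PolishSpace X] [MeasurableSpace X] [BorelSpace X]
    (T : X → X) (hT : Continuous T)
    (hper : Dense {x : X | ∃ p : ℕ, 1 ≤ p ∧ T^[p] x = x}) :
    Dense {μ : {m : ProbabilityMeasure X // InvariantProbMap T m} | FullSupport μ.1} ∧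
    IsGδ {μ : {m : ProbabilityMeasure X // InvariantProbMap T m} | FullSupport μ.1} := by
  have hGδ : IsGδ {μ : {m : ProbabilityMeasure X // InvariantProbMap T m} | FullSupport μ.1} := by
    obtain ⟨B, hBc, hBne, hB⟩ := TopologicalSpace.exists_countable_basis X
    have hset : {μ : {m : ProbabilityMeasure X // InvariantProbMap T m} | FullSupport μ.1}
        = ⋂ U ∈ B, {μ : {m : ProbabilityMeasure X // InvariantProbMap T m} |
            0 < μ.1.toMeasure U} := by
      ext μ
      simp only [Set.mem_setOf_eq, Set.mem_iInter]
      constructor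
      · intro h U hU
        exact h U (hB.isOpen hU)
          (Set.nonempty_iff_ne_empty.mpr fun he => hBne (he ▸ hU))
      · intro h U hUopen hUne
        obtain ⟨y, hy⟩ := hUne
        obtain ⟨V, hVB, hyV, hVU⟩ := hB.exists_subset_of_mem_open hy hUopen
        exact lt_of_lt_of_le (h V hVB) (measure_mono hVU)
    rw [hset]
    refine IsGδ.biInter hBc fun U hU => ?_
    exact (((isOpen_pos_prob U (hB.isOpen hU)).preimage continuous_subtype_val)).isGδ
  refine ⟨?_, hGδ⟩
  rintro ⟨μ, hinv⟩
  -- the space is nonempty since it carries a probability measure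
  have hXne : Nonempty X := by
    by_contra h
    rw [not_nonempty_iff] at h
    have h1 : μ.toMeasure Set.univ = 1 := measure_univ
    rw [Set.univ_eq_empty_iff.mpr h, measure_empty] at h1
    exact zero_ne_one h1
  -- a countable dense family of periodic points
  set s : Set X := {x : X | ∃ p : ℕ, 1 ≤ p ∧ T^[p] x = x} with hs
  have hsne : Nonempty ↥s := Set.Nonempty.to_subtype hper.nonempty
  obtain ⟨u, hu⟩ := TopologicalSpace.exists_dense_seq ↥s
  set x : ℕ → X := fun n => (u n : X) with hxdef
  have hxdense : Dense (Set.range x) :=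
    (hper.denseRange_val.comp hu continuous_subtype_val : DenseRange x)
  have hprop : ∀ n, ∃ q : ℕ, 1 ≤ q ∧ T^[q] (x n) = x n := fun n => (u n).2
  choose p hp1 hp2 using hprop
  -- the full-support invariant reference measure
  set ν : Measure X := nuMeasure T x p with hν
  have hν_univ : ν Set.univ = 1 := nuMeasure_univ T x hp1
  haveI hν_prob : IsProbabilityMeasure ν := ⟨hν_univ⟩
  have hν_inv : ∀ A : Set X, MeasurableSet A → ν (T ⁻¹' A) = ν A :=
    fun A hA => nuMeasure_preimage T x p hp2 hT.measurable hA
  have hν_pos : ∀ U : Set X, IsOpen U → U.Nonempty → 0 < ν U :=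
    fun U hU hUne => nuMeasure_pos T hp1 hxdense hU hUne
  -- the approximating sequence
  set a : ℕ → ℝ≥0∞ := fun n => (((n + 1 : ℕ) : ℝ≥0∞))⁻¹ with ha
  have ha1 : ∀ n, a n ≤ 1 := fun n =>
    ENNReal.inv_le_one.mpr (by exact_mod_cast Nat.succ_le_succ (Nat.zero_le n))
  have ha0 : ∀ n, a n ≠ 0 := fun n => ENNReal.inv_ne_zero.mpr (ENNReal.natCast_ne_top _)
  set m : ℕ → Measure X := fun n => (1 - a n) • μ.toMeasure + a n • ν with hm
  have hm_apply : ∀ n (A : Set X), m n A = (1 - a n) * μ.toMeasure A + a n * ν A := by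
    intro n A
    simp [hm, Measure.add_apply, Measure.smul_apply, smul_eq_mul]
  have hm_prob : ∀ n, IsProbabilityMeasure (m n) := by
    intro n
    constructor
    rw [hm_apply, measure_univ, hν_univ, mul_one, mul_one]
    exact tsub_add_cancel_of_le (ha1 n)
  set seq : ℕ → ProbabilityMeasure X := fun n => ⟨m n, hm_prob n⟩ with hseqdef
  have hseq_inv : ∀ n, InvariantProbMap T (seq n) := by
    intro n A hA
    show m n (T ⁻¹' A) = m n A
    rw [hm_apply, hm_apply, hinv A hA, hν_inv A hA]
  have hseq_full : ∀ n, FullSupport (seq n) := by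
    intro n U hUo hUne
    show 0 < m n U
    rw [hm_apply]
    have hpos : 0 < a n * ν U := ENNReal.mul_pos (ha0 n) (hν_pos U hUo hUne).ne'
    exact lt_of_lt_of_le hpos le_add_self
  -- convergence of the sequence to μ
  have hseq_tendsto : Tendsto seq atTop (𝓝 μ) := by
    rw [ProbabilityMeasure.tendsto_iff_forall_lintegral_tendsto]
    intro f
    have hIμ : (∫⁻ ω, f ω ∂(μ : Measure X)) ≠ ∞ := (f.lintegral_lt_top_of_nnreal _).ne
    have hIν : (∫⁻ ω, f ω ∂ν) ≠ ∞ := (f.lintegral_lt_top_of_nnreal _).ne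
    have heq : ∀ n, (∫⁻ ω, f ω ∂(seq n : Measure X))
        = (1 - a n) * (∫⁻ ω, f ω ∂(μ : Measure X)) + a n * (∫⁻ ω, f ω ∂ν) := by
      intro n
      show (∫⁻ ω, f ω ∂(m n)) = _
      rw [hm, lintegral_add_measure, lintegral_smul_measure, lintegral_smul_measure, smul_eq_mul, smul_eq_mul]
    simp only [heq]
    have haz : Tendsto a atTop (𝓝 0) :=
      ENNReal.tendsto_inv_nat_nhds_zero.comp (tendsto_add_atTop_nat 1)
    have h1 : Tendsto (fun n => (1 - a n) * (∫⁻ ω, f ω ∂(μ : Measure X)))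
        atTop (𝓝 ((1 - 0) * (∫⁻ ω, f ω ∂(μ : Measure X)))) := by
      apply ENNReal.Tendsto.mul_const
      · exact ENNReal.Tendsto.sub tendsto_const_nhds haz (Or.inl ENNReal.one_ne_top)
      · exact Or.inr hIμ
    have h2 : Tendsto (fun n => a n * (∫⁻ ω, f ω ∂ν))
        atTop (𝓝 (0 * (∫⁻ ω, f ω ∂ν))) :=
      ENNReal.Tendsto.mul_const haz (Or.inr hIν)
    have := h1.add h2
    simpa [tsub_zero, one_mul, zero_mul, add_zero] using this
  -- conclude density
  have hseq_tendsto' : Tendsto (fun n => (⟨seq n, hseq_inv n⟩ :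
      {m : ProbabilityMeasure X // InvariantProbMap T m})) atTop
      (𝓝 ⟨μ, hinv⟩) := by
    rw [tendsto_subtype_rng]
    exact hseq_tendsto
  exact mem_closure_of_tendsto hseq_tendsto'
    (Filter.Eventually.of_forall fun n => hseq_full n)
end
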